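/- Fix an odd integer m ≥ 3, integers h ≥ 1 and 0 ≤ p < L, and reals α ∈ [0,1), ε ∈ [0,1). On the index set I_Ξ = {1,…,2m−1}, for k = 1,…,m let B_k = {2k−2, 2k−1, 2k} ∩ I_Ξ and define the (2m−1)×(2m−1) matrix W^k as follows: rows with index outside B_k coincide with the corresponding rows of the identity matrix; rows with index in B_k are zero except W^k_{2k−2,2k−3} = α^{⌊1/h⌋}, W^k_{2k−2,2k+1} = α^{⌊(L−p+1)/h⌋}, W^k_{2k−1,2k−3} = W^k_{2k−1,2k+1} = α^{⌊(p+1)/h⌋}, W^k_{2k,2k−3} = α^{⌊(L−p+1)/h⌋}, W^k_{2k,2k+1} = α^{⌊1/h⌋}, where any entry whose row or column index lies outside I_Ξ is omitted. Let Ŵ^k have entries Ŵ^k_{i,j} = W^k_{i,j} + ε·1[2k−2 ≤ i ≤ 2k and 2k−3 ≤ j ≤ 2k+1]. Set λ = 2α^{⌊(p+1)/h⌋} and W̄ = α^{⌊1/h⌋} + α^{⌊(L−p+1)/h⌋}, and assume λ < 1. Then for the parallel-sweep composite matrix 𝒲̂ = (Ŵ^{m−1}·Ŵ^{m−3}⋯Ŵ^{4}·Ŵ^{2})·(Ŵ^{m}·Ŵ^{m−2}⋯Ŵ^{3}·Ŵ^{1}),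 one has ‖𝒲̂‖_∞ ≤ λ·max(W̄,1) + ε·(2λ + 25ε + 8·max(W̄,1)). -/

import Mathlib

open Finset

/-- Maximum absolute row sum norm `‖A‖_∞`. -/
noncomputable def rowNorm {n : ℕ} (A : Matrix (Fin n) (Fin n) ℝ) : ℝ :=
  ⨆ i, ∑ j, |A i j|

/-- The list `[m, m-1, …, 1]`. -/
def descList (m : ℕ) : List ℕ := (List.range m).map fun i => m - i

/-- Entry `(i,j)` (in 1-based paper indexing, as integers) of the Wasserstein matrix `W^k`
of the lumped Ξ-system for block `k`: rows outside `B_k = {2k-2, 2k-1, 2k} ∩ {1,…,2m-1}`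
are identity rows; rows in `B_k` are zero except for the prescribed boundary entries. -/
noncomputable def wXi (m h L p : ℕ) (α : ℝ) (k : ℕ) (i j : ℤ) : ℝ :=
  if 2 * (k : ℤ) - 2 ≤ i ∧ i ≤ 2 * (k : ℤ) ∧ 1 ≤ i ∧ i ≤ 2 * (m : ℤ) - 1 then
    if i = 2 * (k : ℤ) - 2 ∧ j = 2 * (k : ℤ) - 3 then α ^ (1 / h)
    else if i = 2 * (k : ℤ) - 2 ∧ j = 2 * (k : ℤ) + 1 then α ^ ((L - p + 1) / h)
    else if i = 2 * (k : ℤ) - 1 ∧ (j = 2 * (k : ℤ) - 3 ∨ j = 2 * (k : ℤ) + 1) then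
      α ^ ((p + 1) / h)
    else if i = 2 * (k : ℤ) ∧ j = 2 * (k : ℤ) - 3 then α ^ ((L - p + 1) / h)
    else if i = 2 * (k : ℤ) ∧ j = 2 * (k : ℤ) + 1 then α ^ (1 / h)
    else 0
  else if i = j then 1 else 0

/-- Entry `(i,j)` (1-based integer indexing) of the ε-perturbed matrix `Ŵ^k`. -/
noncomputable def wXiHat (m h L p : ℕ) (α ε : ℝ) (k : ℕ) (i j : ℤ) : ℝ :=
  wXi m h L p α k i j +
    if 2 * (k : ℤ) - 2 ≤ i ∧ i ≤ 2 * (k : ℤ) ∧ 2 * (k : ℤ) - 3 ≤ j ∧ j ≤ 2 * (k : ℤ) + 1 then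
      ε
    else 0

/-- The `(2m-1) × (2m-1)` matrix `Ŵ^k` (the `Fin` index `i` corresponds to paper index `i+1`). -/
noncomputable def wHatMat (m h L p : ℕ) (α ε : ℝ) (k : ℕ) :
    Matrix (Fin (2 * m - 1)) (Fin (2 * m - 1)) ℝ :=
  fun i j => wXiHat m h L p α ε k ((i : ℤ) + 1) ((j : ℤ) + 1)


lemma sum_ite_single {n : ℕ} (a : ℤ) (v : ℝ) (hv : 0 ≤ v) :
    (∑ j : Fin n, if (j : ℤ) + 1 = a then v else 0) ≤ v := by
  classical
  rw [← Finset.sum_filter]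
  have hcard : (Finset.univ.filter fun j : Fin n => (j : ℤ) + 1 = a).card ≤ 1 := by
    apply Finset.card_le_one.mpr
    intro x hx y hy
    simp only [Finset.mem_filter] at hx hy
    have : (x : ℤ) = (y : ℤ) := by omega
    exact Fin.ext (by exact_mod_cast this)
  calc (∑ _j ∈ Finset.univ.filter (fun j : Fin n => (j : ℤ) + 1 = a), v)
      = (Finset.univ.filter (fun j : Fin n => (j : ℤ) + 1 = a)).card • v := Finset.sum_const v
    _ ≤ v := by
        rw [nsmul_eq_mul]
        calc ((Finset.univ.filter (fun j : Fin n => (j : ℤ) + 1 = a)).card : ℝ) * v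
            ≤ 1 * v := by
              apply mul_le_mul_of_nonneg_right _ hv
              exact_mod_cast hcard
          _ = v := one_mul v

lemma sum_ite_band {n : ℕ} (a b : ℤ) (hab : b ≤ a + 4) (v : ℝ) (hv : 0 ≤ v) :
    (∑ j : Fin n, if a ≤ (j : ℤ) + 1 ∧ (j : ℤ) + 1 ≤ b then v else 0) ≤ 5 * v := by
  classical
  rw [← Finset.sum_filter]
  have hcard : (Finset.univ.filter fun j : Fin n => a ≤ (j : ℤ) + 1 ∧ (j : ℤ) + 1 ≤ b).card ≤ 5 := by
    have h1 : (Finset.univ.filter fun j : Fin n => a ≤ (j : ℤ) + 1 ∧ (j : ℤ) + 1 ≤ b).card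
        ≤ (Finset.Icc a (a + 4)).card := by
      refine Finset.card_le_card_of_injOn (fun j => (j : ℤ) + 1) ?_ ?_
      · intro x hx
        simp only [Finset.mem_coe, Finset.mem_filter] at hx
        simp only [Finset.mem_coe, Finset.mem_Icc]
        omega
      · intro x _ y _ hxy
        simp only at hxy
        exact Fin.ext (by omega)
    have h2 : (Finset.Icc a (a + 4)).card = 5 := by
      rw [Int.card_Icc]
      omega
    omega
  calc (∑ _j ∈ Finset.univ.filter (fun j : Fin n => a ≤ (j : ℤ) + 1 ∧ (j : ℤ) + 1 ≤ b), v)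
      = (Finset.univ.filter (fun j : Fin n => a ≤ (j : ℤ) + 1 ∧ (j : ℤ) + 1 ≤ b)).card • v :=
        Finset.sum_const v
    _ ≤ 5 * v := by
        rw [nsmul_eq_mul]
        apply mul_le_mul_of_nonneg_right _ hv
        exact_mod_cast hcard

section entry
variable (m h L p : ℕ) (α ε : ℝ)

lemma wHat_row_id (k : ℕ) (i j : Fin (2 * m - 1))
    (hi : ¬(2 * (k : ℤ) - 2 ≤ (i : ℤ) + 1 ∧ (i : ℤ) + 1 ≤ 2 * (k : ℤ))) :
    wHatMat m h L p α ε k i j = if i = j then 1 else 0 := by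
  simp only [wHatMat, wXiHat, wXi]
  rw [if_neg (show ¬(2 * (k : ℤ) - 2 ≤ (i : ℤ) + 1 ∧ (i : ℤ) + 1 ≤ 2 * (k : ℤ) ∧
        1 ≤ (i : ℤ) + 1 ∧ (i : ℤ) + 1 ≤ 2 * (m : ℤ) - 1) by omega),
      if_neg (show ¬(2 * (k : ℤ) - 2 ≤ (i : ℤ) + 1 ∧ (i : ℤ) + 1 ≤ 2 * (k : ℤ) ∧
        2 * (k : ℤ) - 3 ≤ (j : ℤ) + 1 ∧ (j : ℤ) + 1 ≤ 2 * (k : ℤ) + 1) by omega), add_zero]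
  have hiff : ((i : ℤ) + 1 = (j : ℤ) + 1) ↔ i = j := by
    rw [Fin.ext_iff]; omega
  rw [if_congr hiff rfl rfl]

lemma wHat_col_zero (k : ℕ) (i j : Fin (2 * m - 1))
    (hi : 2 * (k : ℤ) - 2 ≤ (i : ℤ) + 1 ∧ (i : ℤ) + 1 ≤ 2 * (k : ℤ))
    (hj : ¬(2 * (k : ℤ) - 3 ≤ (j : ℤ) + 1 ∧ (j : ℤ) + 1 ≤ 2 * (k : ℤ) + 1)) :
    wHatMat m h L p α ε k i j = 0 := by
  simp only [wHatMat, wXiHat, wXi]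
  split_ifs <;> first | (exfalso; omega) | norm_num

lemma wHat_nonneg (hα0 : 0 ≤ α) (hε0 : 0 ≤ ε) (k : ℕ) (i j : Fin (2 * m - 1)) :
    0 ≤ wHatMat m h L p α ε k i j := by
  simp only [wHatMat, wXiHat, wXi]
  split_ifs <;>
    linarith [pow_nonneg hα0 (1 / h), pow_nonneg hα0 ((L - p + 1) / h),
      pow_nonneg hα0 ((p + 1) / h)]

lemma entry_top (hα0 : 0 ≤ α) (k : ℕ) (i : Fin (2 * m - 1))
    (hi : (i : ℤ) + 1 = 2 * (k : ℤ) - 2) (c : Fin (2 * m - 1)) :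
    wHatMat m h L p α ε k i c ≤
      ((if (c : ℤ) + 1 = 2 * (k : ℤ) - 3 then α ^ (1 / h) else 0)
      + (if (c : ℤ) + 1 = 2 * (k : ℤ) + 1 then α ^ ((L - p + 1) / h) else 0))
      + (if 2 * (k : ℤ) - 3 ≤ (c : ℤ) + 1 ∧ (c : ℤ) + 1 ≤ 2 * (k : ℤ) + 1 then ε else 0) := by
  have hlt := i.isLt
  simp only [wHatMat, wXiHat, wXi]
  split_ifs <;>
    first
      | (exfalso; omega)
      | linarith [pow_nonneg hα0 (1 / h), pow_nonneg hα0 ((L - p + 1) / h),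
          pow_nonneg hα0 ((p + 1) / h)]

lemma entry_mid (hα0 : 0 ≤ α) (k : ℕ) (i : Fin (2 * m - 1))
    (hi : (i : ℤ) + 1 = 2 * (k : ℤ) - 1) (c : Fin (2 * m - 1)) :
    wHatMat m h L p α ε k i c ≤
      ((if (c : ℤ) + 1 = 2 * (k : ℤ) - 3 then α ^ ((p + 1) / h) else 0)
      + (if (c : ℤ) + 1 = 2 * (k : ℤ) + 1 then α ^ ((p + 1) / h) else 0))
      + (if 2 * (k : ℤ) - 3 ≤ (c : ℤ) + 1 ∧ (c : ℤ) + 1 ≤ 2 * (k : ℤ) + 1 then ε else 0) := by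
  have hlt := i.isLt
  simp only [wHatMat, wXiHat, wXi]
  split_ifs <;>
    first
      | (exfalso; omega)
      | linarith [pow_nonneg hα0 (1 / h), pow_nonneg hα0 ((L - p + 1) / h),
          pow_nonneg hα0 ((p + 1) / h)]

lemma entry_bot (hα0 : 0 ≤ α) (k : ℕ) (i : Fin (2 * m - 1))
    (hi : (i : ℤ) + 1 = 2 * (k : ℤ)) (c : Fin (2 * m - 1)) :
    wHatMat m h L p α ε k i c ≤
      ((if (c : ℤ) + 1 = 2 * (k : ℤ) - 3 then α ^ ((L - p + 1) / h) else 0)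
      + (if (c : ℤ) + 1 = 2 * (k : ℤ) + 1 then α ^ (1 / h) else 0))
      + (if 2 * (k : ℤ) - 3 ≤ (c : ℤ) + 1 ∧ (c : ℤ) + 1 ≤ 2 * (k : ℤ) + 1 then ε else 0) := by
  have hlt := i.isLt
  simp only [wHatMat, wXiHat, wXi]
  split_ifs <;>
    first
      | (exfalso; omega)
      | linarith [pow_nonneg hα0 (1 / h), pow_nonneg hα0 ((L - p + 1) / h),
          pow_nonneg hα0 ((p + 1) / h)]

lemma rowsum_gen (hε0 : 0 ≤ ε) (k : ℕ) (i : Fin (2 * m - 1)) (v1 v2 : ℝ)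
    (hv1 : 0 ≤ v1) (hv2 : 0 ≤ v2) (hα0 : 0 ≤ α)
    (hval : ∀ c : Fin (2 * m - 1), wHatMat m h L p α ε k i c ≤
      ((if (c : ℤ) + 1 = 2 * (k : ℤ) - 3 then v1 else 0)
      + (if (c : ℤ) + 1 = 2 * (k : ℤ) + 1 then v2 else 0))
      + (if 2 * (k : ℤ) - 3 ≤ (c : ℤ) + 1 ∧ (c : ℤ) + 1 ≤ 2 * (k : ℤ) + 1 then ε else 0)) :
    (∑ j, |wHatMat m h L p α ε k i j|) ≤ (v1 + v2) + 5 * ε := by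
  calc (∑ j, |wHatMat m h L p α ε k i j|)
      = ∑ j, wHatMat m h L p α ε k i j :=
        Finset.sum_congr rfl fun j _ => abs_of_nonneg (wHat_nonneg m h L p α ε hα0 hε0 k i j)
    _ ≤ ∑ c : Fin (2 * m - 1),
        (((if (c : ℤ) + 1 = 2 * (k : ℤ) - 3 then v1 else 0)
        + (if (c : ℤ) + 1 = 2 * (k : ℤ) + 1 then v2 else 0))
        + (if 2 * (k : ℤ) - 3 ≤ (c : ℤ) + 1 ∧ (c : ℤ) + 1 ≤ 2 * (k : ℤ) + 1 then ε else 0)) :=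
        Finset.sum_le_sum fun c _ => hval c
    _ = ((∑ c : Fin (2 * m - 1), if (c : ℤ) + 1 = 2 * (k : ℤ) - 3 then v1 else 0)
        + (∑ c : Fin (2 * m - 1), if (c : ℤ) + 1 = 2 * (k : ℤ) + 1 then v2 else 0))
        + (∑ c : Fin (2 * m - 1), if 2 * (k : ℤ) - 3 ≤ (c : ℤ) + 1 ∧ (c : ℤ) + 1 ≤ 2 * (k : ℤ) + 1 then ε else 0) := by
        rw [Finset.sum_add_distrib, Finset.sum_add_distrib]
    _ ≤ (v1 + v2) + 5 * ε := by
        apply add_le_add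
        · exact add_le_add (sum_ite_single _ _ hv1) (sum_ite_single _ _ hv2)
        · exact sum_ite_band _ _ (by omega) _ hε0

end entry
section prodstruct
variable (m h L p : ℕ) (α ε : ℝ)

lemma prod_row_id (l : List ℕ) (i : Fin (2 * m - 1))
    (hi : ∀ k ∈ l, ¬(2 * (k : ℤ) - 2 ≤ (i : ℤ) + 1 ∧ (i : ℤ) + 1 ≤ 2 * (k : ℤ)))
    (j : Fin (2 * m - 1)) :
    ((l.map (wHatMat m h L p α ε)).prod) i j = if i = j then 1 else 0 := by
  induction l generalizing j with
  | nil => simp [Matrix.one_apply]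
  | cons a t ih =>
    simp only [List.map_cons, List.prod_cons]
    rw [Matrix.mul_apply]
    have hrow : ∀ c, wHatMat m h L p α ε a i c = if i = c then 1 else 0 := fun c =>
      wHat_row_id m h L p α ε a i c (hi a (List.mem_cons_self))
    have hterm : ∀ c ∈ Finset.univ, wHatMat m h L p α ε a i c *
        ((t.map (wHatMat m h L p α ε)).prod) c j =
        if i = c then ((t.map (wHatMat m h L p α ε)).prod) c j else 0 := by
      intro c _
      rw [hrow c]
      split_ifs <;> ring
    rw [Finset.sum_congr rfl hterm, Finset.sum_ite_eq]
    simp only [Finset.mem_univ, if_true]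
    exact ih (fun k hk => hi k (List.mem_cons_of_mem a hk)) j

lemma prod_row_blk (l : List ℕ) (hnd : l.Nodup)
    (hsep : ∀ a ∈ l, ∀ b ∈ l, a ≠ b → a + 2 ≤ b ∨ b + 2 ≤ a)
    (k : ℕ) (hk : k ∈ l) (i : Fin (2 * m - 1))
    (hi : 2 * (k : ℤ) - 2 ≤ (i : ℤ) + 1 ∧ (i : ℤ) + 1 ≤ 2 * (k : ℤ))
    (j : Fin (2 * m - 1)) :
    ((l.map (wHatMat m h L p α ε)).prod) i j = wHatMat m h L p α ε k i j := by
  induction l generalizing j with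
  | nil => simp at hk
  | cons a t ih =>
    simp only [List.map_cons, List.prod_cons]
    rw [Matrix.mul_apply]
    by_cases hak : a = k
    · subst hak
      have hnotmem : a ∉ t := (List.nodup_cons.mp hnd).1
      have hterm : ∀ c ∈ Finset.univ, wHatMat m h L p α ε a i c *
          ((t.map (wHatMat m h L p α ε)).prod) c j =
          wHatMat m h L p α ε a i c * (if c = j then 1 else 0) := by
        intro c _
        by_cases hz : wHatMat m h L p α ε a i c = 0
        · rw [hz]; ring
        · have hcr : 2 * (a : ℤ) - 3 ≤ (c : ℤ) + 1 ∧ (c : ℤ) + 1 ≤ 2 * (a : ℤ) + 1 := by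
            by_contra hcon
            exact hz (wHat_col_zero m h L p α ε a i c hi hcon)
          have hidrow : ∀ b ∈ t, ¬(2 * (b : ℤ) - 2 ≤ (c : ℤ) + 1 ∧ (c : ℤ) + 1 ≤ 2 * (b : ℤ)) := by
            intro b hb
            have hba : b ≠ a := fun hba => hnotmem (hba ▸ hb)
            have := hsep a (List.mem_cons_self) b (List.mem_cons_of_mem a hb) (fun e => hba e.symm)
            omega
          rw [prod_row_id m h L p α ε t c hidrow j]
      rw [Finset.sum_congr rfl hterm]
      have : ∀ c ∈ Finset.univ, wHatMat m h L p α ε a i c * (if c = j then 1 else 0)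
          = if c = j then wHatMat m h L p α ε a i c else 0 := by
        intro c _; split_ifs <;> ring
      rw [Finset.sum_congr rfl this, Finset.sum_ite_eq']
      simp
    · have hka : k ∈ t := by
        rcases List.mem_cons.mp hk with h1 | h1
        · exact absurd h1.symm hak
        · exact h1
      have hnotblk : ¬(2 * (a : ℤ) - 2 ≤ (i : ℤ) + 1 ∧ (i : ℤ) + 1 ≤ 2 * (a : ℤ)) := by
        have := hsep a (List.mem_cons_self) k hk (fun e => hak e)
        omega
      have hrow : ∀ c, wHatMat m h L p α ε a i c = if i = c then 1 else 0 := fun c =>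
        wHat_row_id m h L p α ε a i c hnotblk
      have hterm : ∀ c ∈ Finset.univ, wHatMat m h L p α ε a i c *
          ((t.map (wHatMat m h L p α ε)).prod) c j =
          if i = c then ((t.map (wHatMat m h L p α ε)).prod) c j else 0 := by
        intro c _
        rw [hrow c]
        split_ifs <;> ring
      rw [Finset.sum_congr rfl hterm, Finset.sum_ite_eq]
      simp only [Finset.mem_univ, if_true]
      exact ih (List.nodup_cons.mp hnd).2
        (fun x hx y hy => hsep x (List.mem_cons_of_mem a hx) y (List.mem_cons_of_mem a hy))
        hka j

end prodstruct

lemma mem_descList {m k : ℕ} : k ∈ descList m ↔ 1 ≤ k ∧ k ≤ m := by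
  simp only [descList, List.mem_map, List.mem_range]
  constructor
  · rintro ⟨i, hi, rfl⟩; omega
  · intro hk; exact ⟨m - k, by omega, by omega⟩

lemma nodup_descList (m : ℕ) : (descList m).Nodup := by
  apply List.Nodup.map_on _ (List.nodup_range)
  intro x hx y hy hxy
  simp only [List.mem_range] at hx hy
  omega

lemma mem_filter_descList {m k r : ℕ} :
    k ∈ (descList m).filter (fun k => k % 2 = r) ↔ (1 ≤ k ∧ k ≤ m ∧ k % 2 = r) := by
  rw [List.mem_filter, mem_descList]
  simp only [decide_eq_true_eq]
  tauto

set_option maxHeartbeats 2000000 in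
theorem stmt4 (m h L p : ℕ) (hm : 3 ≤ m) (hmodd : m % 2 = 1) (hh : 1 ≤ h) (hpL : p < L)
    (α ε : ℝ) (hα0 : 0 ≤ α) (hα1 : α < 1) (hε0 : 0 ≤ ε) (hε1 : ε < 1)
    (hlam : 2 * α ^ ((p + 1) / h) < 1) :
    rowNorm
      (((((descList m).filter fun k => k % 2 = 0).map (wHatMat m h L p α ε)).prod) *
        ((((descList m).filter fun k => k % 2 = 1).map (wHatMat m h L p α ε)).prod)) ≤
      (2 * α ^ ((p + 1) / h)) * max (α ^ (1 / h) + α ^ ((L - p + 1) / h)) 1 +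
        ε * (2 * (2 * α ^ ((p + 1) / h)) + 25 * ε +
          8 * max (α ^ (1 / h) + α ^ ((L - p + 1) / h)) 1) := by
  have he1 : (0:ℝ) ≤ (α ^ (1 / h)) := pow_nonneg hα0 _
  have heL : (0:ℝ) ≤ (α ^ ((L - p + 1) / h)) := pow_nonneg hα0 _
  have hep : (0:ℝ) ≤ (α ^ ((p + 1) / h)) := pow_nonneg hα0 _
  have hWbM : ((α ^ (1 / h)) + (α ^ ((L - p + 1) / h))) ≤ (max (α ^ (1 / h) + α ^ ((L - p + 1) / h)) 1) := le_max_left _ _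
  have hM1 : (1:ℝ) ≤ (max (α ^ (1 / h) + α ^ ((L - p + 1) / h)) 1) := le_max_right _ _
  have hndE : ((descList m).filter (fun k => k % 2 = 0)).Nodup := (nodup_descList m).filter _
  have hndO : ((descList m).filter (fun k => k % 2 = 1)).Nodup := (nodup_descList m).filter _
  have hsepE : ∀ a ∈ (descList m).filter (fun k => k % 2 = 0),
      ∀ b ∈ (descList m).filter (fun k => k % 2 = 0), a ≠ b → a + 2 ≤ b ∨ b + 2 ≤ a := by
    intro a ha b hb hab
    rw [mem_filter_descList] at ha hb
    omega
  have hsepO : ∀ a ∈ (descList m).filter (fun k => k % 2 = 1),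
      ∀ b ∈ (descList m).filter (fun k => k % 2 = 1), a ≠ b → a + 2 ≤ b ∨ b + 2 ≤ a := by
    intro a ha b hb hab
    rw [mem_filter_descList] at ha hb
    omega
  set Pe : Matrix (Fin (2*m-1)) (Fin (2*m-1)) ℝ :=
    ((((descList m).filter fun k => k % 2 = 0).map (wHatMat m h L p α ε)).prod) with hPed
  set Po : Matrix (Fin (2*m-1)) (Fin (2*m-1)) ℝ :=
    ((((descList m).filter fun k => k % 2 = 1).map (wHatMat m h L p α ε)).prod) with hPod
  have hS0 : ∀ c : Fin (2*m-1), (0:ℝ) ≤ ∑ j, |Po c j| :=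
    fun c => Finset.sum_nonneg fun j _ => abs_nonneg _
  have cb_mid : ∀ kk : ℕ, kk % 2 = 1 → 1 ≤ kk → kk ≤ m → ∀ c : Fin (2*m-1),
      (c : ℤ) + 1 = 2 * (kk : ℤ) - 1 → (∑ j, |Po c j|) ≤ (2 * (α ^ ((p + 1) / h))) + 5 * ε := by
    intro kk h1 h2 h3 c hc
    have hmem : kk ∈ (descList m).filter (fun k => k % 2 = 1) :=
      mem_filter_descList.mpr ⟨h2, h3, h1⟩
    have heq : ∀ j, Po c j = wHatMat m h L p α ε kk c j :=
      prod_row_blk m h L p α ε _ hndO hsepO kk hmem c (by omega)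
    have hval := entry_mid m h L p α ε hα0 kk c hc
    calc (∑ j, |Po c j|) = ∑ j, |wHatMat m h L p α ε kk c j| :=
          Finset.sum_congr rfl fun j _ => by rw [heq j]
      _ ≤ ((α ^ ((p + 1) / h)) + (α ^ ((p + 1) / h))) + 5 * ε := rowsum_gen m h L p α ε hε0 kk c _ _ hep hep hα0 hval
      _ ≤ (2 * (α ^ ((p + 1) / h))) + 5 * ε := by linarith
  have cb_side : ∀ kk : ℕ, kk % 2 = 1 → 1 ≤ kk → kk ≤ m → ∀ c : Fin (2*m-1),
      ((c : ℤ) + 1 = 2 * (kk : ℤ) - 2 ∨ (c : ℤ) + 1 = 2 * (kk : ℤ)) →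
      (∑ j, |Po c j|) ≤ ((α ^ (1 / h)) + (α ^ ((L - p + 1) / h))) + 5 * ε := by
    intro kk h1 h2 h3 c hc
    have hmem : kk ∈ (descList m).filter (fun k => k % 2 = 1) :=
      mem_filter_descList.mpr ⟨h2, h3, h1⟩
    have heq : ∀ j, Po c j = wHatMat m h L p α ε kk c j :=
      prod_row_blk m h L p α ε _ hndO hsepO kk hmem c (by omega)
    have hstep : (∑ j, |Po c j|) = ∑ j, |wHatMat m h L p α ε kk c j| :=
      Finset.sum_congr rfl fun j _ => by rw [heq j]
    rcases hc with hc | hc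
    · rw [hstep]
      exact rowsum_gen m h L p α ε hε0 kk c _ _ he1 heL hα0
        (entry_top m h L p α ε hα0 kk c hc)
    · rw [hstep]
      have hr := rowsum_gen m h L p α ε hε0 kk c _ _ heL he1 hα0
        (entry_bot m h L p α ε hα0 kk c hc)
      linarith
  have cb_id : ∀ c : Fin (2*m-1),
      (∀ kk : ℕ, kk % 2 = 1 → 1 ≤ kk → kk ≤ m →
        ¬(2 * (kk : ℤ) - 2 ≤ (c : ℤ) + 1 ∧ (c : ℤ) + 1 ≤ 2 * (kk : ℤ))) →
      (∑ j, |Po c j|) = 1 := by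
    intro c hc
    have hid : ∀ k ∈ (descList m).filter (fun k => k % 2 = 1),
        ¬(2 * (k : ℤ) - 2 ≤ (c : ℤ) + 1 ∧ (c : ℤ) + 1 ≤ 2 * (k : ℤ)) := by
      intro k hk
      rw [mem_filter_descList] at hk
      exact hc k hk.2.2 hk.1 hk.2.1
    have heq : ∀ j, Po c j = if c = j then 1 else 0 := prod_row_id m h L p α ε _ c hid
    calc (∑ j, |Po c j|) = ∑ j : Fin (2*m-1), (if c = j then (1:ℝ) else 0) := by
          refine Finset.sum_congr rfl fun j _ => ?_
          rw [heq j]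
          split_ifs <;> simp
      _ = 1 := by rw [Finset.sum_ite_eq]; simp
  have core : ∀ (k : ℕ), k % 2 = 0 → 2 ≤ k → k + 1 ≤ m → ∀ i : Fin (2*m-1),
      2 * (k : ℤ) - 2 ≤ (i : ℤ) + 1 → (i : ℤ) + 1 ≤ 2 * (k : ℤ) →
      ∀ (v1 v2 : ℝ), 0 ≤ v1 → 0 ≤ v2 →
      (∀ c : Fin (2*m-1), wHatMat m h L p α ε k i c ≤
        ((if (c : ℤ) + 1 = 2 * (k : ℤ) - 3 then v1 else 0)
        + (if (c : ℤ) + 1 = 2 * (k : ℤ) + 1 then v2 else 0))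
        + (if 2 * (k : ℤ) - 3 ≤ (c : ℤ) + 1 ∧ (c : ℤ) + 1 ≤ 2 * (k : ℤ) + 1 then ε else 0)) →
      (∑ c, |wHatMat m h L p α ε k i c| * (∑ j, |Po c j|)) ≤
        (v1 + ε) * ((2 * (α ^ ((p + 1) / h))) + 5*ε) + ε * (((α ^ (1 / h)) + (α ^ ((L - p + 1) / h))) + 5*ε) + ε
          + ε * (((α ^ (1 / h)) + (α ^ ((L - p + 1) / h))) + 5*ε) + (v2 + ε) * ((2 * (α ^ ((p + 1) / h))) + 5*ε) := by
    intro k hk2 hk1 hkm i hbl hbu v1 v2 hv1 hv2 hval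
    have hc1 : (0:ℝ) ≤ (2 * (α ^ ((p + 1) / h))) + 5*ε := by linarith
    have hc2 : (0:ℝ) ≤ ((α ^ (1 / h)) + (α ^ ((L - p + 1) / h))) + 5*ε := by linarith
    have hG : ∀ c : Fin (2*m-1), |wHatMat m h L p α ε k i c| * (∑ j, |Po c j|) ≤
        (if (c : ℤ) + 1 = 2 * (k : ℤ) - 3 then (v1 + ε) * ((2 * (α ^ ((p + 1) / h))) + 5*ε) else 0)
        + (if (c : ℤ) + 1 = 2 * (k : ℤ) - 2 then ε * (((α ^ (1 / h)) + (α ^ ((L - p + 1) / h))) + 5*ε) else 0)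
        + (if (c : ℤ) + 1 = 2 * (k : ℤ) - 1 then ε else 0)
        + (if (c : ℤ) + 1 = 2 * (k : ℤ) then ε * (((α ^ (1 / h)) + (α ^ ((L - p + 1) / h))) + 5*ε) else 0)
        + (if (c : ℤ) + 1 = 2 * (k : ℤ) + 1 then (v2 + ε) * ((2 * (α ^ ((p + 1) / h))) + 5*ε) else 0) := by
      intro c
      rw [abs_of_nonneg (wHat_nonneg m h L p α ε hα0 hε0 k i c)]
      have hWle := hval c
      rcases (show (c : ℤ) + 1 = 2 * (k : ℤ) - 3 ∨ (c : ℤ) + 1 = 2 * (k : ℤ) - 2 ∨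
          (c : ℤ) + 1 = 2 * (k : ℤ) - 1 ∨ (c : ℤ) + 1 = 2 * (k : ℤ) ∨
          (c : ℤ) + 1 = 2 * (k : ℤ) + 1 ∨
          ¬(2 * (k : ℤ) - 3 ≤ (c : ℤ) + 1 ∧ (c : ℤ) + 1 ≤ 2 * (k : ℤ) + 1) from by omega)
        with hc | hc | hc | hc | hc | hc
      · rw [if_pos hc, if_neg (by omega), if_neg (by omega), if_neg (by omega), if_neg (by omega)]
        rw [if_pos hc, if_neg (by omega), if_pos (by omega)] at hWle
        have hSb : (∑ j, |Po c j|) ≤ (2 * (α ^ ((p + 1) / h))) + 5*ε :=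
          cb_mid (k-1) (by omega) (by omega) (by omega) c (by omega)
        have := mul_le_mul (show wHatMat m h L p α ε k i c ≤ v1 + ε by linarith) hSb (hS0 c)
          (by linarith)
        linarith
      · rw [if_neg (by omega), if_pos hc, if_neg (by omega), if_neg (by omega), if_neg (by omega)]
        rw [if_neg (by omega), if_neg (by omega), if_pos (by omega)] at hWle
        have hSb : (∑ j, |Po c j|) ≤ ((α ^ (1 / h)) + (α ^ ((L - p + 1) / h))) + 5*ε :=
          cb_side (k-1) (by omega) (by omega) (by omega) c (by omega)
        have := mul_le_mul (show wHatMat m h L p α ε k i c ≤ ε by linarith) hSb (hS0 c) hε0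
        linarith
      · rw [if_neg (by omega), if_neg (by omega), if_pos hc, if_neg (by omega), if_neg (by omega)]
        rw [if_neg (by omega), if_neg (by omega), if_pos (by omega)] at hWle
        have hSb : (∑ j, |Po c j|) = 1 := by
          apply cb_id
          intro kk hkk1 hkk2 hkk3
          omega
        have := mul_le_mul (show wHatMat m h L p α ε k i c ≤ ε by linarith) (le_of_eq hSb)
          (hS0 c) hε0
        linarith
      · rw [if_neg (by omega), if_neg (by omega), if_neg (by omega), if_pos hc, if_neg (by omega)]
        rw [if_neg (by omega), if_neg (by omega), if_pos (by omega)] at hWle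
        have hSb : (∑ j, |Po c j|) ≤ ((α ^ (1 / h)) + (α ^ ((L - p + 1) / h))) + 5*ε :=
          cb_side (k+1) (by omega) (by omega) (by omega) c (by omega)
        have := mul_le_mul (show wHatMat m h L p α ε k i c ≤ ε by linarith) hSb (hS0 c) hε0
        linarith
      · rw [if_neg (by omega), if_neg (by omega), if_neg (by omega), if_neg (by omega), if_pos hc]
        rw [if_neg (by omega), if_pos hc, if_pos (by omega)] at hWle
        have hSb : (∑ j, |Po c j|) ≤ (2 * (α ^ ((p + 1) / h))) + 5*ε :=
          cb_mid (k+1) (by omega) (by omega) (by omega) c (by omega)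
        have := mul_le_mul (show wHatMat m h L p α ε k i c ≤ v2 + ε by linarith) hSb (hS0 c)
          (by linarith)
        linarith
      · rw [if_neg (by omega), if_neg (by omega), if_neg (by omega), if_neg (by omega),
          if_neg (by omega)]
        have hW0 : wHatMat m h L p α ε k i c = 0 := wHat_col_zero m h L p α ε k i c ⟨hbl, hbu⟩ hc
        rw [hW0, zero_mul]
        norm_num
    calc (∑ c, |wHatMat m h L p α ε k i c| * (∑ j, |Po c j|))
        ≤ ∑ c : Fin (2*m-1),
          ((if (c : ℤ) + 1 = 2 * (k : ℤ) - 3 then (v1 + ε) * ((2 * (α ^ ((p + 1) / h))) + 5*ε) else 0)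
          + (if (c : ℤ) + 1 = 2 * (k : ℤ) - 2 then ε * (((α ^ (1 / h)) + (α ^ ((L - p + 1) / h))) + 5*ε) else 0)
          + (if (c : ℤ) + 1 = 2 * (k : ℤ) - 1 then ε else 0)
          + (if (c : ℤ) + 1 = 2 * (k : ℤ) then ε * (((α ^ (1 / h)) + (α ^ ((L - p + 1) / h))) + 5*ε) else 0)
          + (if (c : ℤ) + 1 = 2 * (k : ℤ) + 1 then (v2 + ε) * ((2 * (α ^ ((p + 1) / h))) + 5*ε) else 0)) :=
          Finset.sum_le_sum fun c _ => hG c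
      _ = (∑ c : Fin (2*m-1), if (c : ℤ) + 1 = 2 * (k : ℤ) - 3 then (v1 + ε) * ((2 * (α ^ ((p + 1) / h))) + 5*ε) else 0)
          + (∑ c : Fin (2*m-1), if (c : ℤ) + 1 = 2 * (k : ℤ) - 2 then ε * (((α ^ (1 / h)) + (α ^ ((L - p + 1) / h))) + 5*ε) else 0)
          + (∑ c : Fin (2*m-1), if (c : ℤ) + 1 = 2 * (k : ℤ) - 1 then ε else 0)
          + (∑ c : Fin (2*m-1), if (c : ℤ) + 1 = 2 * (k : ℤ) then ε * (((α ^ (1 / h)) + (α ^ ((L - p + 1) / h))) + 5*ε) else 0)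
          + (∑ c : Fin (2*m-1), if (c : ℤ) + 1 = 2 * (k : ℤ) + 1 then (v2 + ε) * ((2 * (α ^ ((p + 1) / h))) + 5*ε) else 0) := by
          rw [Finset.sum_add_distrib, Finset.sum_add_distrib, Finset.sum_add_distrib,
            Finset.sum_add_distrib]
      _ ≤ (v1 + ε) * ((2 * (α ^ ((p + 1) / h))) + 5*ε) + ε * (((α ^ (1 / h)) + (α ^ ((L - p + 1) / h))) + 5*ε) + ε
          + ε * (((α ^ (1 / h)) + (α ^ ((L - p + 1) / h))) + 5*ε) + (v2 + ε) * ((2 * (α ^ ((p + 1) / h))) + 5*ε) := by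
          apply add_le_add
          apply add_le_add
          apply add_le_add
          apply add_le_add
          · exact sum_ite_single _ _ (by positivity)
          · exact sum_ite_single _ _ (by positivity)
          · exact sum_ite_single _ _ hε0
          · exact sum_ite_single _ _ (by positivity)
          · exact sum_ite_single _ _ (by positivity)
  have key : ∀ i : Fin (2*m-1), (∑ j, |(Pe * Po) i j|) ≤
      (2 * (α ^ ((p + 1) / h))) * (max (α ^ (1 / h) + α ^ ((L - p + 1) / h)) 1) + ε * (2 * (2 * (α ^ ((p + 1) / h))) + 25 * ε + 8 * (max (α ^ (1 / h) + α ^ ((L - p + 1) / h)) 1)) := by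
    intro i
    have step1 : (∑ j, |(Pe * Po) i j|) ≤ ∑ c, |Pe i c| * (∑ j, |Po c j|) := by
      calc (∑ j, |(Pe * Po) i j|) = ∑ j, |∑ c, Pe i c * Po c j| := by
            simp only [Matrix.mul_apply]
        _ ≤ ∑ j, ∑ c, |Pe i c * Po c j| :=
            Finset.sum_le_sum fun j _ => Finset.abs_sum_le_sum_abs _ _
        _ = ∑ c, ∑ j, |Pe i c * Po c j| := Finset.sum_comm
        _ = ∑ c, |Pe i c| * (∑ j, |Po c j|) := by
            refine Finset.sum_congr rfl fun c _ => ?_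
            rw [Finset.mul_sum]
            exact Finset.sum_congr rfl fun j _ => abs_mul _ _
    by_cases hcase : ∃ kk : ℕ, kk % 2 = 0 ∧ 1 ≤ kk ∧ kk ≤ m ∧
        2 * (kk : ℤ) - 2 ≤ (i : ℤ) + 1 ∧ (i : ℤ) + 1 ≤ 2 * (kk : ℤ)
    · obtain ⟨k, hk2, hk1, hkm, hbl, hbu⟩ := hcase
      have hk1' : 2 ≤ k := by omega
      have hkm' : k + 1 ≤ m := by omega
      have hmem : k ∈ (descList m).filter (fun k => k % 2 = 0) :=
        mem_filter_descList.mpr ⟨hk1, hkm, hk2⟩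
      have hPeq : ∀ c, Pe i c = wHatMat m h L p α ε k i c :=
        prod_row_blk m h L p α ε _ hndE hsepE k hmem i ⟨hbl, hbu⟩
      have step2 : (∑ c, |Pe i c| * (∑ j, |Po c j|)) =
          ∑ c, |wHatMat m h L p α ε k i c| * (∑ j, |Po c j|) :=
        Finset.sum_congr rfl fun c _ => by rw [hPeq c]
      rcases (show (i : ℤ) + 1 = 2 * (k : ℤ) - 2 ∨ (i : ℤ) + 1 = 2 * (k : ℤ) - 1 ∨
          (i : ℤ) + 1 = 2 * (k : ℤ) from by omega) with hi | hi | hi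
      · have hb := core k hk2 hk1' hkm' i hbl hbu (α ^ (1 / h)) (α ^ ((L - p + 1) / h)) he1 heL
          (entry_top m h L p α ε hα0 k i hi)
        have hsc : ((α ^ (1 / h)) + ε) * ((2 * (α ^ ((p + 1) / h))) + 5*ε) + ε * (((α ^ (1 / h)) + (α ^ ((L - p + 1) / h))) + 5*ε) + ε
            + ε * (((α ^ (1 / h)) + (α ^ ((L - p + 1) / h))) + 5*ε) + ((α ^ ((L - p + 1) / h)) + ε) * ((2 * (α ^ ((p + 1) / h))) + 5*ε)
            ≤ (2 * (α ^ ((p + 1) / h))) * (max (α ^ (1 / h) + α ^ ((L - p + 1) / h)) 1) + ε * (2 * (2 * (α ^ ((p + 1) / h))) + 25 * ε + 8 * (max (α ^ (1 / h) + α ^ ((L - p + 1) / h)) 1)) := by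
          nlinarith [mul_nonneg (show (0:ℝ) ≤ (2 * (α ^ ((p + 1) / h))) by linarith) (sub_nonneg.mpr hWbM),
            mul_nonneg hε0 (sub_nonneg.mpr hWbM), mul_nonneg hε0 (sub_nonneg.mpr hM1),
            sq_nonneg ε]
        linarith [step1, step2.le, hb]
      · have hb := core k hk2 hk1' hkm' i hbl hbu (α ^ ((p + 1) / h)) (α ^ ((p + 1) / h)) hep hep
          (entry_mid m h L p α ε hα0 k i hi)
        have hsc : ((α ^ ((p + 1) / h)) + ε) * ((2 * (α ^ ((p + 1) / h))) + 5*ε) + ε * (((α ^ (1 / h)) + (α ^ ((L - p + 1) / h))) + 5*ε) + ε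
            + ε * (((α ^ (1 / h)) + (α ^ ((L - p + 1) / h))) + 5*ε) + ((α ^ ((p + 1) / h)) + ε) * ((2 * (α ^ ((p + 1) / h))) + 5*ε)
            ≤ (2 * (α ^ ((p + 1) / h))) * (max (α ^ (1 / h) + α ^ ((L - p + 1) / h)) 1) + ε * (2 * (2 * (α ^ ((p + 1) / h))) + 25 * ε + 8 * (max (α ^ (1 / h) + α ^ ((L - p + 1) / h)) 1)) := by
          have hMlam : (0:ℝ) ≤ (max (α ^ (1 / h) + α ^ ((L - p + 1) / h)) 1) - (2 * (α ^ ((p + 1) / h))) := by linarith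
          nlinarith [mul_nonneg (show (0:ℝ) ≤ (2 * (α ^ ((p + 1) / h))) by linarith) hMlam,
            mul_nonneg hε0 hMlam,
            mul_nonneg hε0 (sub_nonneg.mpr hWbM), mul_nonneg hε0 (sub_nonneg.mpr hM1),
            sq_nonneg ε, mul_nonneg hε0 (show (0:ℝ) ≤ 1 - (2 * (α ^ ((p + 1) / h))) by linarith)]
        linarith [step1, step2.le, hb]
      · have hb := core k hk2 hk1' hkm' i hbl hbu (α ^ ((L - p + 1) / h)) (α ^ (1 / h)) heL he1
          (entry_bot m h L p α ε hα0 k i hi)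
        have hsc : ((α ^ ((L - p + 1) / h)) + ε) * ((2 * (α ^ ((p + 1) / h))) + 5*ε) + ε * (((α ^ (1 / h)) + (α ^ ((L - p + 1) / h))) + 5*ε) + ε
            + ε * (((α ^ (1 / h)) + (α ^ ((L - p + 1) / h))) + 5*ε) + ((α ^ (1 / h)) + ε) * ((2 * (α ^ ((p + 1) / h))) + 5*ε)
            ≤ (2 * (α ^ ((p + 1) / h))) * (max (α ^ (1 / h) + α ^ ((L - p + 1) / h)) 1) + ε * (2 * (2 * (α ^ ((p + 1) / h))) + 25 * ε + 8 * (max (α ^ (1 / h) + α ^ ((L - p + 1) / h)) 1)) := by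
          nlinarith [mul_nonneg (show (0:ℝ) ≤ (2 * (α ^ ((p + 1) / h))) by linarith) (sub_nonneg.mpr hWbM),
            mul_nonneg hε0 (sub_nonneg.mpr hWbM), mul_nonneg hε0 (sub_nonneg.mpr hM1),
            sq_nonneg ε]
        linarith [step1, step2.le, hb]
    · have hA : ∀ kk : ℕ, ¬(kk % 2 = 0 ∧ 1 ≤ kk ∧ kk ≤ m ∧
          2 * (kk : ℤ) - 2 ≤ (i : ℤ) + 1 ∧ (i : ℤ) + 1 ≤ 2 * (kk : ℤ)) :=
        fun kk hkk => hcase ⟨kk, hkk⟩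
      have hPeid : ∀ c, Pe i c = if i = c then 1 else 0 := by
        apply prod_row_id
        intro k hk
        rw [mem_filter_descList] at hk
        have := hA k
        omega
      have step2 : (∑ c, |Pe i c| * (∑ j, |Po c j|)) = ∑ j, |Po i j| := by
        calc (∑ c, |Pe i c| * (∑ j, |Po c j|))
            = ∑ c : Fin (2*m-1), (if i = c then (∑ j, |Po c j|) else 0) := by
              refine Finset.sum_congr rfl fun c _ => ?_
              rw [hPeid c]
              split_ifs <;> simp
          _ = ∑ j, |Po i j| := by rw [Finset.sum_ite_eq]; simp
      have hb0 := hA ((i.val + 2) / 2)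
      have hbm := hA ((i.val + 2) / 2 - 1)
      have hbp := hA ((i.val + 2) / 2 + 1)
      have hlt := i.isLt
      have hex : ∃ k0 : ℕ, k0 % 2 = 1 ∧ 1 ≤ k0 ∧ k0 ≤ m ∧ (i : ℤ) + 1 = 2 * (k0 : ℤ) - 1 :=
        ⟨(i.val + 2) / 2, by omega, by omega, by omega, by omega⟩
      obtain ⟨k0, hk01, hk02, hk03, hk04⟩ := hex
      have hSb : (∑ j, |Po i j|) ≤ (2 * (α ^ ((p + 1) / h))) + 5 * ε := cb_mid k0 hk01 hk02 hk03 i hk04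
      have hsc : (2 * (α ^ ((p + 1) / h))) + 5 * ε ≤ (2 * (α ^ ((p + 1) / h))) * (max (α ^ (1 / h) + α ^ ((L - p + 1) / h)) 1) + ε * (2 * (2 * (α ^ ((p + 1) / h))) + 25 * ε + 8 * (max (α ^ (1 / h) + α ^ ((L - p + 1) / h)) 1)) := by
        nlinarith [mul_nonneg (show (0:ℝ) ≤ (2 * (α ^ ((p + 1) / h))) by linarith) (sub_nonneg.mpr hM1),
          mul_nonneg hε0 (sub_nonneg.mpr hM1), sq_nonneg ε,
          mul_nonneg hε0 (show (0:ℝ) ≤ (2 * (α ^ ((p + 1) / h))) by linarith)]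
      linarith [step1, step2.le]
  have hne : Nonempty (Fin (2*m-1)) := ⟨⟨0, by omega⟩⟩
  exact ciSup_le key
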